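/- For every integer n > 2, every ν ≥ 0 and every x ≥ 0, the Dunkl–Szász–Beta operator applied to the identity function satisfies T_n(s; x) = (1/(n−2)) ( nx − (2ν/e_ν(nx)) Σ_{r=1}^∞ θ_r (nx)^r/γ_ν(r) ), where θ_r = 0 if r is even and θ_r = 1 if r is odd. -/

import Mathlib

open MeasureTheory Filter

noncomputable def dGamma (ν : ℝ) (r : ℕ) : ℝ :=
  if r % 2 = 0 then
    2 ^ r * (Nat.factorial (r / 2)) * Real.Gamma ((r / 2 : ℕ) + ν + 1 / 2) / Real.Gamma (ν + 1 / 2)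
  else
    2 ^ r * (Nat.factorial (r / 2)) * Real.Gamma ((r / 2 : ℕ) + ν + 3 / 2) / Real.Gamma (ν + 1 / 2)

noncomputable def eDunkl (ν x : ℝ) : ℝ := ∑' r : ℕ, x ^ r / dGamma ν r

noncomputable def Tn (ν : ℝ) (n : ℕ) (g : ℝ → ℝ) (x : ℝ) : ℝ :=
  ((n : ℝ) - 1) / eDunkl ν (n * x) *
      ∑' k : ℕ, (Nat.choose (n + k - 1) k : ℝ) * (n * x) ^ (k + 1) / dGamma ν (k + 1) *
        ∫ s in Set.Ioi (0 : ℝ), s ^ k / (1 + s) ^ (n + k) * g s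
    + g 0 / eDunkl ν (n * x)

noncomputable def theta (k : ℕ) : ℝ := if k % 2 = 0 then 0 else 1


lemma tendstoAux (m q : ℕ) :
    Tendsto (fun s : ℝ => s ^ m * ((1 + s) ^ (m + q + 1))⁻¹) atTop (nhds 0) := by
  have h1 : Tendsto (fun s : ℝ => (1 + s)⁻¹) atTop (nhds 0) :=
    tendsto_inv_atTop_zero.comp (tendsto_atTop_add_const_left _ 1 tendsto_id)
  apply squeeze_zero' (g := fun s : ℝ => (1 + s)⁻¹)
  · filter_upwards [eventually_ge_atTop (0:ℝ)] with s hs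
    positivity
  · filter_upwards [eventually_ge_atTop (0:ℝ)] with s hs
    have h1s : (1:ℝ) ≤ 1 + s := by linarith
    have h0s : (0:ℝ) < 1 + s := by linarith
    have hb : s ^ m * (1 + s) ≤ (1 + s) ^ (m + q + 1) := by
      calc s ^ m * (1 + s) ≤ (1 + s) ^ m * (1 + s) := by
            apply mul_le_mul_of_nonneg_right (pow_le_pow_left₀ hs (by linarith) m) h0s.le
        _ = (1 + s) ^ (m + 1) := by ring
        _ ≤ (1 + s) ^ (m + q + 1) := pow_le_pow_right₀ h1s (by omega)
    rw [mul_inv_le_iff₀ (by positivity), inv_mul_eq_div, le_div_iff₀ h0s]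
    linarith [hb]
  · exact h1

lemma integrableAux (m p : ℕ) (h : m + 2 ≤ p) :
    IntegrableOn (fun s : ℝ => s ^ m * ((1 + s) ^ p)⁻¹) (Set.Ioi 0) := by
  have hbase : IntegrableOn (fun s : ℝ => ((1 + s) ^ 2)⁻¹) (Set.Ioi 0) := by
    apply integrableOn_Ioi_deriv_of_nonneg' (g := fun s : ℝ => -(1 + s)⁻¹)
    · intro s hs
      have h0s : (0:ℝ) < 1 + s := by simp at hs; linarith
      have : HasDerivAt (fun s : ℝ => -(1 + s)⁻¹) _ s := (((hasDerivAt_id s).const_add 1).inv h0s.ne').neg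
      convert this using 1
      simp [neg_div]
    · intro s hs
      positivity
    · have h1 : Tendsto (fun s : ℝ => (1 + s)⁻¹) atTop (nhds 0) :=
        tendsto_inv_atTop_zero.comp (tendsto_atTop_add_const_left _ 1 tendsto_id)
      simpa using h1.neg
  apply hbase.mono'
  · apply (Measurable.aestronglyMeasurable ?_).restrict
    exact (measurable_id.pow_const m).mul ((measurable_const.add measurable_id).pow_const p).inv
  · filter_upwards [ae_restrict_mem measurableSet_Ioi] with s hs
    simp only [Set.mem_Ioi] at hs
    have h0s : (0:ℝ) < 1 + s := by linarith
    have hb : s ^ m * (1 + s) ^ 2 ≤ (1 + s) ^ p := by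
      calc s ^ m * (1 + s) ^ 2 ≤ (1 + s) ^ m * (1 + s) ^ 2 := by
            apply mul_le_mul_of_nonneg_right (pow_le_pow_left₀ hs.le (by linarith) m) (by positivity)
        _ = (1 + s) ^ (m + 2) := by ring
        _ ≤ (1 + s) ^ p := pow_le_pow_right₀ (by linarith) h
    rw [Real.norm_eq_abs, abs_of_nonneg (by positivity)]
    rw [mul_inv_le_iff₀ (by positivity), inv_mul_eq_div, le_div_iff₀ (by positivity)]
    linarith [hb]

-- derivative helper: F t = t^a * ((1+t)^c)⁻¹
lemma hasDerivAtAux (a c : ℕ) (s : ℝ) (hs : 0 < 1 + s) :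
    HasDerivAt (fun t : ℝ => t ^ a * ((1 + t) ^ c)⁻¹)
      ((a : ℝ) * s ^ (a - 1) * ((1 + s) ^ c)⁻¹
        - (c : ℝ) * s ^ a * ((1 + s) ^ (c + 1))⁻¹) s := by
  have h1 : HasDerivAt (fun t : ℝ => 1 + t) 1 s := (hasDerivAt_id s).const_add 1
  have h2 : HasDerivAt (fun t : ℝ => (1 + t) ^ c) ((c : ℝ) * (1 + s) ^ (c - 1) * 1) s := h1.pow c
  have h3 := h2.inv (by positivity)
  have h4 : HasDerivAt (fun t : ℝ => t ^ a * ((1 + t) ^ c)⁻¹) _ s := (hasDerivAt_pow a s).mul h3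
  convert h4 using 1
  rcases c with _ | c
  · simp
  · have : ((1:ℝ) + s) ^ (c + 1 + 1) = (1 + s) ^ (c+1) * (1+s) := by ring
    simp only [Nat.add_sub_cancel]
    field_simp
    ring

lemma betaAux : ∀ m q : ℕ,
    ∫ s in Set.Ioi (0:ℝ), s ^ m * ((1 + s) ^ (m + q + 2))⁻¹ =
      (m.factorial : ℝ) * q.factorial / (m + q + 1).factorial := by
  intro m
  induction m with
  | zero =>
    intro q
    have hq : (0:ℝ) < (q:ℝ) + 1 := by positivity
    have hderiv : ∀ s ∈ Set.Ici (0:ℝ),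
        HasDerivAt (fun t : ℝ => -(t ^ 0 * ((1 + t) ^ (q + 1))⁻¹) / ((q:ℝ) + 1))
          (s ^ 0 * ((1 + s) ^ (0 + q + 2))⁻¹) s := by
      intro s hs
      simp only [Set.mem_Ici] at hs
      have h : HasDerivAt (fun t : ℝ => -(t ^ 0 * ((1 + t) ^ (q + 1))⁻¹) / ((q:ℝ) + 1)) _ s :=
        ((hasDerivAtAux 0 (q + 1) s (by linarith)).neg).div_const ((q:ℝ) + 1)
      convert h using 1
      have h1 : (0:ℝ) < 1 + s := by linarith
      field_simp
      push_cast
      ring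
    have htend : Tendsto (fun t : ℝ => -(t ^ 0 * ((1 + t) ^ (q + 1))⁻¹) / ((q:ℝ) + 1))
        atTop (nhds 0) := by
      have := ((tendstoAux 0 q).neg).div_const ((q:ℝ) + 1)
      simpa using this
    have := integral_Ioi_of_hasDerivAt_of_tendsto' hderiv
      (integrableAux 0 (0 + q + 2) (by omega)) htend
    rw [this]
    rw [Nat.factorial_succ]
    push_cast
    have hf : (q.factorial : ℝ) ≠ 0 := by positivity
    field_simp
    simp
  | succ m ih =>
    intro q
    have hderiv : ∀ s ∈ Set.Ici (0:ℝ),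
        HasDerivAt (fun t : ℝ => t ^ (m + 1) * ((1 + t) ^ (m + q + 2))⁻¹)
          (((m:ℝ) + 1) * (s ^ m * ((1 + s) ^ (m + q + 2))⁻¹)
            - ((m:ℝ) + q + 2) * (s ^ (m + 1) * ((1 + s) ^ (m + q + 3))⁻¹)) s := by
      intro s hs
      simp only [Set.mem_Ici] at hs
      have h := hasDerivAtAux (m + 1) (m + q + 2) s (by linarith)
      convert h using 1
      simp only [Nat.add_sub_cancel]
      push_cast
      try ring
    have hint : IntegrableOn (fun s : ℝ =>
        ((m:ℝ) + 1) * (s ^ m * ((1 + s) ^ (m + q + 2))⁻¹)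
          - ((m:ℝ) + q + 2) * (s ^ (m + 1) * ((1 + s) ^ (m + q + 3))⁻¹)) (Set.Ioi 0) :=
      ((integrableAux m (m + q + 2) (by omega)).const_mul _).sub
        ((integrableAux (m + 1) (m + q + 3) (by omega)).const_mul _)
    have htend : Tendsto (fun t : ℝ => t ^ (m + 1) * ((1 + t) ^ (m + q + 2))⁻¹)
        atTop (nhds 0) := by
      have := tendstoAux (m + 1) q
      simpa [show m + 1 + q + 1 = m + q + 2 by omega] using this
    have h0 := integral_Ioi_of_hasDerivAt_of_tendsto' hderiv hint htend
    rw [integral_sub ((integrableAux m (m + q + 2) (by omega)).const_mul _)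
        ((integrableAux (m + 1) (m + q + 3) (by omega)).const_mul _),
      integral_const_mul, integral_const_mul, ih q] at h0
    norm_num at h0
    -- h0 : (m+1) * (m! q!/(m+q+1)!) - (m+q+2) * ∫ ... = 0 - 0
    have h1 : ∫ s in Set.Ioi (0:ℝ), s ^ (m + 1) * ((1 + s) ^ (m + 1 + q + 2))⁻¹
        = ((m:ℝ) + 1) * ((m.factorial : ℝ) * q.factorial / (m + q + 1).factorial)
            / ((m:ℝ) + q + 2) := by
      have hne : ((m:ℝ) + q + 2) ≠ 0 := by positivity
      have : m + 1 + q + 2 = m + q + 3 := by omega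
      rw [this]
      field_simp at h0 ⊢
      linarith [h0]
    have e : m + 1 + q + 1 = (m + q + 1) + 1 := by omega
    rw [h1, Nat.factorial_succ m, e, Nat.factorial_succ (m + q + 1)]
    have hne1 : ((m + q + 1).factorial : ℝ) ≠ 0 := by positivity
    push_cast
    field_simp
    ring

lemma theta_nonneg (k : ℕ) : 0 ≤ theta k := by unfold theta; split <;> norm_num

lemma theta_le_one (k : ℕ) : theta k ≤ 1 := by unfold theta; split <;> norm_num

lemma dGamma_pos {ν : ℝ} (hν : 0 ≤ ν) (r : ℕ) : 0 < dGamma ν r := by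
  have h0 : (0:ℝ) < Real.Gamma (ν + 1 / 2) := Real.Gamma_pos_of_pos (by linarith)
  unfold dGamma
  split
  · have : (0:ℝ) < Real.Gamma ((r / 2 : ℕ) + ν + 1 / 2) :=
      Real.Gamma_pos_of_pos (by positivity)
    positivity
  · have : (0:ℝ) < Real.Gamma ((r / 2 : ℕ) + ν + 3 / 2) :=
      Real.Gamma_pos_of_pos (by positivity)
    positivity

lemma dGamma_zero {ν : ℝ} (hν : 0 ≤ ν) : dGamma ν 0 = 1 := by
  have h0 : (0:ℝ) < Real.Gamma (ν + 1 / 2) := Real.Gamma_pos_of_pos (by linarith)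
  have h1 : (0:ℝ) < Real.Gamma (ν + 2⁻¹) := Real.Gamma_pos_of_pos (by linarith)
  simp [dGamma]
  exact h1.ne'

lemma dGamma_succ {ν : ℝ} (hν : 0 ≤ ν) (k : ℕ) :
    dGamma ν (k + 1) = ((k : ℝ) + 1 + 2 * ν * theta (k + 1)) * dGamma ν k := by
  rcases Nat.even_or_odd k with ⟨r, hr⟩ | ⟨r, hr⟩
  · -- k = 2r
    subst hr
    have h1 : (r + r) % 2 = 0 := by omega
    have h2 : (r + r + 1) % 2 = 1 := by omega
    have h3 : (r + r) / 2 = r := by omega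
    have h4 : (r + r + 1) / 2 = r := by omega
    have hz : (0:ℝ) < (r:ℝ) + ν + 1 / 2 := by positivity
    simp only [dGamma, theta, h1, h2, h3, h4, if_true, if_false]
    norm_num
    rw [show ((r:ℝ) + ν + 3 / 2) = ((r:ℝ) + ν + 1 / 2) + 1 by ring, Real.Gamma_add_one hz.ne']
    have hG : Real.Gamma (ν + 1 / 2) ≠ 0 := (Real.Gamma_pos_of_pos (by linarith)).ne'
    field_simp
    push_cast
    ring
  · -- k = 2r + 1
    subst hr
    have h1 : (2 * r + 1) % 2 = 1 := by omega
    have h2 : (2 * r + 1 + 1) % 2 = 0 := by omega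
    have h3 : (2 * r + 1) / 2 = r := by omega
    have h4 : (2 * r + 1 + 1) / 2 = r + 1 := by omega
    simp only [dGamma, theta, h1, h2, h3, h4, if_true, if_false]
    norm_num
    rw [show ((r:ℝ) + 1 + ν + 1 / 2) = (r:ℝ) + ν + 3 / 2 by ring]
    rw [Nat.factorial_succ]
    have hG : Real.Gamma (ν + 1 / 2) ≠ 0 := (Real.Gamma_pos_of_pos (by linarith)).ne'
    field_simp
    push_cast
    ring

lemma factorial_le_dGamma {ν : ℝ} (hν : 0 ≤ ν) (k : ℕ) :
    (k.factorial : ℝ) ≤ dGamma ν k := by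
  induction k with
  | zero => simp [dGamma_zero hν]
  | succ k ih =>
    rw [dGamma_succ hν k, Nat.factorial_succ]
    push_cast
    have h1 : ((k:ℝ) + 1) ≤ (k:ℝ) + 1 + 2 * ν * theta (k + 1) := by
      have := theta_nonneg (k + 1)
      nlinarith
    have h2 : (0:ℝ) ≤ (k.factorial : ℝ) := by positivity
    nlinarith [dGamma_pos hν k]

lemma summable_dunkl {ν : ℝ} (hν : 0 ≤ ν) {y : ℝ} (hy : 0 ≤ y) :
    Summable (fun k : ℕ => y ^ k / dGamma ν k) := by
  apply Summable.of_nonneg_of_le (f := fun k : ℕ => y ^ k / k.factorial)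
  · intro k
    have := dGamma_pos hν k
    positivity
  · intro k
    exact div_le_div_of_nonneg_left (by positivity) (by positivity)
      (factorial_le_dGamma hν k)
  · exact Real.summable_pow_div_factorial y

lemma summable_dunkl_shift {ν : ℝ} (hν : 0 ≤ ν) {y : ℝ} (hy : 0 ≤ y) :
    Summable (fun k : ℕ => y ^ (k + 1) / dGamma ν (k + 1)) :=
  (summable_dunkl hν hy).comp_injective Nat.succ_injective

lemma summable_theta {ν : ℝ} (hν : 0 ≤ ν) {y : ℝ} (hy : 0 ≤ y) :
    Summable (fun k : ℕ => theta (k + 1) * y ^ (k + 1) / dGamma ν (k + 1)) := by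
  apply Summable.of_nonneg_of_le (f := fun k : ℕ => y ^ (k + 1) / dGamma ν (k + 1))
  · intro k
    have := theta_nonneg (k + 1)
    have := (dGamma_pos hν (k + 1))
    positivity
  · intro k
    apply div_le_div_of_nonneg_right ?_ (dGamma_pos hν (k + 1)).le
    have h1 := theta_le_one (k + 1)
    have h2 : (0:ℝ) ≤ y ^ (k + 1) := by positivity
    nlinarith
  · exact summable_dunkl_shift hν hy

lemma eDunkl_aux {ν : ℝ} (hν : 0 ≤ ν) {y : ℝ} (hy : 0 ≤ y) :
    1 ≤ ∑' r : ℕ, y ^ r / dGamma ν r := by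
  have h := Summable.le_tsum (summable_dunkl hν hy) 0 (fun i _ => by
    have := dGamma_pos hν i
    positivity)
  simpa [dGamma_zero hν] using h

theorem stmt17 (ν : ℝ) (hν : 0 ≤ ν) (n : ℕ) (hn : 2 < n) (x : ℝ) (hx : 0 ≤ x) :
    Tn ν n (fun s => s) x =
      1 / ((n : ℝ) - 2) *
        ((n : ℝ) * x -
          2 * ν / eDunkl ν (n * x) *
            ∑' r : ℕ, theta (r + 1) * (n * x) ^ (r + 1) / dGamma ν (r + 1)) := by
  obtain ⟨m, rfl⟩ : ∃ m, n = m + 3 := ⟨n - 3, by omega⟩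
  rw [Tn]
  simp only [zero_div, add_zero]
  set y : ℝ := ((m + 3 : ℕ) : ℝ) * x with hy_def
  have hterm : ∀ k : ℕ,
      (Nat.choose (m + 3 + k - 1) k : ℝ) * y ^ (k + 1) / dGamma ν (k + 1) *
          ∫ s in Set.Ioi (0 : ℝ), s ^ k / (1 + s) ^ (m + 3 + k) * s =
        (1 / (((m:ℝ) + 2) * ((m:ℝ) + 1))) * (((k:ℝ) + 1) * (y ^ (k + 1) / dGamma ν (k + 1))) := by
    intro k
    have hi : (∫ s in Set.Ioi (0:ℝ), s ^ k / (1 + s) ^ (m + 3 + k) * s)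
        = (((k+1).factorial : ℝ) * (m.factorial : ℝ) / ((((k + 1) + m + 1).factorial : ℕ) : ℝ)) := by
      have hf : (fun s : ℝ => s ^ k / (1 + s) ^ (m + 3 + k) * s)
          = fun s : ℝ => s ^ (k + 1) * ((1 + s) ^ ((k + 1) + m + 2))⁻¹ := by
        funext s
        rw [show (k + 1) + m + 2 = m + 3 + k by omega]
        rw [div_mul_eq_mul_div, ← pow_succ, div_eq_mul_inv]
      rw [hf, betaAux (k + 1) m]
    rw [hi]
    have hch : ((m + 3 + k - 1).choose k) = ((m + k + 2).choose k) := by congr 1; omega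
    have hnat : (m + k + 2).choose k * k.factorial * (m + 2).factorial = (m + k + 2).factorial := by
      have h := Nat.choose_mul_factorial_mul_factorial (show k ≤ m + k + 2 by omega)
      rwa [show m + k + 2 - k = m + 2 by omega] at h
    have hR : ((m + k + 2).choose k : ℝ) * (k.factorial : ℝ) * ((m + 2).factorial : ℝ)
        = ((m + k + 2).factorial : ℝ) := by exact_mod_cast hnat
    rw [hch, show (k + 1) + m + 1 = m + k + 2 by omega]
    have e1 : (((k+1).factorial : ℕ) : ℝ) = ((k:ℝ) + 1) * (k.factorial : ℝ) := by
      rw [Nat.factorial_succ]; push_cast; ring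
    have e2 : (((m + 2).factorial : ℕ) : ℝ)
        = ((m:ℝ) + 2) * ((m:ℝ) + 1) * (m.factorial : ℝ) := by
      rw [Nat.factorial_succ, Nat.factorial_succ]; push_cast; ring
    have hkey : ((m + k + 2).choose k : ℝ) * (((k+1).factorial : ℕ) : ℝ) * (m.factorial : ℝ)
          * (((m:ℝ) + 2) * ((m:ℝ) + 1))
        = ((k:ℝ) + 1) * ((m + k + 2).factorial : ℝ) := by
      rw [e1]
      linear_combination ((k:ℝ) + 1) * hR
        - ((k:ℝ) + 1) * (((m + k + 2).choose k : ℝ)) * (k.factorial : ℝ) * e2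
    have hγ : dGamma ν (k + 1) ≠ 0 := (dGamma_pos hν (k + 1)).ne'
    have hfact : (((m + k + 2).factorial : ℕ) : ℝ) ≠ 0 := by positivity
    have hm1 : ((m:ℝ) + 1) ≠ 0 := by positivity
    have hm2 : ((m:ℝ) + 2) ≠ 0 := by positivity
    have hscal : ((m + k + 2).choose k : ℝ) * (((k+1).factorial : ℕ) : ℝ) * ((m.factorial : ℕ) : ℝ)
        / (((m + k + 2).factorial : ℕ) : ℝ) = ((k:ℝ) + 1) / (((m:ℝ) + 2) * ((m:ℝ) + 1)) := by
      rw [div_eq_div_iff hfact (mul_ne_zero hm2 hm1)]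
      linear_combination hkey
    have hre : ((m + k + 2).choose k : ℝ) * y ^ (k + 1) / dGamma ν (k + 1)
          * ((((k+1).factorial : ℕ) : ℝ) * ((m.factorial : ℕ) : ℝ) / (((m + k + 2).factorial : ℕ) : ℝ))
        = (((m + k + 2).choose k : ℝ) * (((k+1).factorial : ℕ) : ℝ) * ((m.factorial : ℕ) : ℝ)
            / (((m + k + 2).factorial : ℕ) : ℝ)) * (y ^ (k + 1) / dGamma ν (k + 1)) := by
      ring
    rw [hre, hscal]
    ring

  have hts : (∑' (k : ℕ), (Nat.choose (m + 3 + k - 1) k : ℝ) * y ^ (k + 1) / dGamma ν (k + 1) *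
      ∫ (s : ℝ) in Set.Ioi 0, s ^ k / (1 + s) ^ (m + 3 + k) * s)
      = 1 / (((m:ℝ) + 2) * ((m:ℝ) + 1)) * ∑' (k : ℕ), ((k:ℝ) + 1) * (y ^ (k + 1) / dGamma ν (k + 1)) := by
    rw [← tsum_mul_left]
    exact tsum_congr hterm
  have hy : 0 ≤ y := by positivity
  have hsum : (∑' (k : ℕ), ((k:ℝ) + 1) * (y ^ (k + 1) / dGamma ν (k + 1)))
      = y * eDunkl ν y -
        2 * ν * ∑' (r : ℕ), theta (r + 1) * y ^ (r + 1) / dGamma ν (r + 1) := by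
    have hterm2 : ∀ k : ℕ, ((k:ℝ) + 1) * (y ^ (k + 1) / dGamma ν (k + 1))
        = y * (y ^ k / dGamma ν k)
          - 2 * ν * (theta (k + 1) * y ^ (k + 1) / dGamma ν (k + 1)) := by
      intro k
      have hpos : (0:ℝ) < (k:ℝ) + 1 + 2 * ν * theta (k + 1) := by
        nlinarith [theta_nonneg (k + 1)]
      have hg := dGamma_pos hν k
      rw [dGamma_succ hν k]
      field_simp
      ring
    rw [tsum_congr hterm2,
      Summable.tsum_sub ((summable_dunkl hν hy).mul_left y)
        ((summable_theta hν hy).mul_left (2 * ν)),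
      tsum_mul_left, tsum_mul_left, eDunkl]
  rw [hts, hsum]
  have he : (0:ℝ) < eDunkl ν y := lt_of_lt_of_le one_pos (by rw [eDunkl]; exact eDunkl_aux hν hy)
  have hm1 : ((m:ℝ) + 1) ≠ 0 := by positivity
  have hm2 : ((m:ℝ) + 2) ≠ 0 := by positivity
  set E := eDunkl ν y with hE
  set S := ∑' (r : ℕ), theta (r + 1) * y ^ (r + 1) / dGamma ν (r + 1) with hS
  have hcast : ((m + 3 : ℕ) : ℝ) = (m:ℝ) + 3 := by push_cast; ring
  rw [hcast]
  have h1 : (m:ℝ) + 3 - 1 = (m:ℝ) + 2 := by ring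
  have h2 : (m:ℝ) + 3 - 2 = (m:ℝ) + 1 := by ring
  rw [h1, h2]
  field_simp
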